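/- For all positive integers r and i satisfying r ≥ 2i, the Turán density of the r-suspension of the expanded triangle T_{2i} satisfies π(T̂_{2i}^r) ≤ i/r. -/

import Mathlib

open Filter Finset Topology

/-- The degree of a vertex in a hypergraph given as a finite set of edges. -/
def hypDegree {V : Type*} [DecidableEq V] (F : Finset (Finset V)) (v : V) : ℕ :=
  (F.filter fun e => v ∈ e).card

/-- `H` contains a copy of `F`: a map injective on the vertex support of `F`
sending every edge of `F` to an edge of `H`. -/
def HasCopy {V W : Type*} [DecidableEq V] (H : Finset (Finset V))
    (F : Finset (Finset W)) : Prop :=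
  ∃ φ : W → V, Set.InjOn φ (⋃ e ∈ F, (e : Set W)) ∧ ∀ e ∈ F, e.image φ ∈ H

/-- `F` is isomorphic to `G` (as edge sets; isolated vertices are irrelevant). -/
def IsIsoTo {V W : Type*} [DecidableEq V] (F : Finset (Finset W))
    (G : Finset (Finset V)) : Prop :=
  ∃ φ : W → V, Set.InjOn φ (⋃ e ∈ F, (e : Set W)) ∧ F.image (fun e => e.image φ) = G

open scoped Classical in
/-- The Turán number `ex(n, F)`: the maximum number of edges of an `F`-free
`r`-uniform hypergraph on `n` vertices. -/
noncomputable def exNum (r n : ℕ) {m : ℕ} (F : Finset (Finset (Fin m))) : ℕ :=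
  ((Finset.univ : Finset (Finset (Finset (Fin n)))).filter fun H =>
    (∀ e ∈ H, e.card = r) ∧ ¬ HasCopy H F).sup Finset.card

/-- The Turán density `π(F) = lim_{n → ∞} ex(n,F) / C(n,r)` (the limit exists). -/
noncomputable def turanDensity (r : ℕ) {m : ℕ} (F : Finset (Finset (Fin m))) : ℝ :=
  limUnder atTop fun n : ℕ => (exNum r n F : ℝ) / (n.choose r : ℝ)

/-- `γ(r)`: the maximum Turán density of an `r`-uniform hypergraph with exactly
three edges. -/
noncomputable def gammaT (r : ℕ) : ℝ :=
  sSup {x : ℝ | ∃ (m : ℕ) (F : Finset (Finset (Fin m))),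
    (∀ e ∈ F, e.card = r) ∧ F.card = 3 ∧ turanDensity r F = x}

/-- The expanded triangle `T_{2k}` on `3k` vertices: three pairwise disjoint
`k`-sets `S 0, S 1, S 2`, with edges `S 0 ∪ S 1`, `S 1 ∪ S 2`, `S 2 ∪ S 0`. -/
def expTriangle (k : ℕ) : Finset (Finset (Fin (3 * k))) :=
  let S : ℕ → Finset (Fin (3 * k)) :=
    fun a => Finset.univ.filter fun v => a * k ≤ v.val ∧ v.val < (a + 1) * k
  {S 0 ∪ S 1, S 1 ∪ S 2, S 2 ∪ S 0}

/-- The suspension of a hypergraph: add the same set of `t` new cone vertices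
to every edge.  For an `s`-graph `F`, the `r`-suspension `F̂^r` is `suspend (r - s) F`. -/
def suspend {m : ℕ} (t : ℕ) (F : Finset (Finset (Fin m))) :
    Finset (Finset (Fin (m + t))) :=
  F.image fun e =>
    e.image (Fin.castAdd t) ∪ Finset.univ.filter fun v : Fin (m + t) => m ≤ v.val

namespace TuranSusp

lemma exists_enum {α : Type*} [DecidableEq α] {s : Finset α} {c : ℕ} (h : s.card = c) :
    ∃ f : Fin c → α, Function.Injective f ∧ Finset.image f Finset.univ = s := by
  subst h
  refine ⟨fun j => (s.equivFin.symm j : α), ?_, ?_⟩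
  · exact Subtype.val_injective.comp s.equivFin.symm.injective
  · ext a
    simp only [Finset.mem_image, Finset.mem_univ, true_and]
    constructor
    · rintro ⟨j, rfl⟩; exact (s.equivFin.symm j).2
    · intro ha; exact ⟨s.equivFin ⟨a, ha⟩, by simp⟩

lemma image_filter_eq {N : ℕ} {α : Type*} [DecidableEq α] (P : Fin N → Prop) [DecidablePred P]
    {lo len : ℕ} (hlen : lo + len ≤ N)
    (hiff : ∀ v : Fin N, P v ↔ (lo ≤ v.val ∧ v.val < lo + len))
    (f : Fin len → α) (φ : Fin N → α)
    (hφ : ∀ (v : Fin N) (h1 : lo ≤ v.val) (h2 : v.val < lo + len),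
      φ v = f ⟨v.val - lo, by omega⟩) :
    (Finset.univ.filter P).image φ = Finset.univ.image f := by
  ext x
  simp only [Finset.mem_image, Finset.mem_filter, Finset.mem_univ, true_and]
  constructor
  · rintro ⟨v, hv, rfl⟩
    obtain ⟨h1, h2⟩ := (hiff v).1 hv
    exact ⟨_, (hφ v h1 h2).symm⟩
  · rintro ⟨j, rfl⟩
    refine ⟨⟨lo + (j : ℕ), by omega⟩, (hiff _).2 (by simp [j.isLt]), ?_⟩
    rw [hφ _ (by simp) (by simp [j.isLt])]
    congr 1
    ext
    simp

variable {n r i : ℕ}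

def tφ (i t' : ℕ) {n : ℕ} (fA fB fW : Fin i → Fin n) (fC : Fin t' → Fin n) :
    Fin (3 * i + t') → Fin n := fun v =>
  if h0 : v.val < i then fA ⟨v.val, h0⟩
  else if h1 : v.val < 2 * i then fB ⟨v.val - i, by omega⟩
  else if h2 : v.val < 3 * i then fW ⟨v.val - 2 * i, by omega⟩
  else fC ⟨v.val - 3 * i, by have := v.isLt; omega⟩

lemma tφ_eval0 {i t' : ℕ} {fA fB fW : Fin i → Fin n} {fC : Fin t' → Fin n}
    (v : Fin (3 * i + t')) (h : v.val < i) : tφ i t' fA fB fW fC v = fA ⟨v.val, h⟩ :=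
  dif_pos h

lemma tφ_eval1 {i t' : ℕ} {fA fB fW : Fin i → Fin n} {fC : Fin t' → Fin n}
    (v : Fin (3 * i + t')) (h1 : i ≤ v.val) (h2 : v.val < 2 * i) :
    tφ i t' fA fB fW fC v = fB ⟨v.val - i, by omega⟩ := by
  rw [tφ, dif_neg (by omega), dif_pos h2]

lemma tφ_eval2 {i t' : ℕ} {fA fB fW : Fin i → Fin n} {fC : Fin t' → Fin n}
    (v : Fin (3 * i + t')) (h1 : 2 * i ≤ v.val) (h2 : v.val < 3 * i) :
    tφ i t' fA fB fW fC v = fW ⟨v.val - 2 * i, by omega⟩ := by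
  rw [tφ, dif_neg (by omega), dif_neg (by omega), dif_pos h2]

lemma tφ_eval3 {i t' : ℕ} {fA fB fW : Fin i → Fin n} {fC : Fin t' → Fin n}
    (v : Fin (3 * i + t')) (h1 : 3 * i ≤ v.val) :
    tφ i t' fA fB fW fC v = fC ⟨v.val - 3 * i, by have := v.isLt; omega⟩ := by
  rw [tφ, dif_neg (by omega), dif_neg (by omega), dif_neg (by omega)]

lemma hasCopy_of_triangle (hi : 1 ≤ i) (hr : 2 * i ≤ r)
    {H : Finset (Finset (Fin n))} {A B W C : Finset (Fin n)}
    (hA : A.card = i) (hB : B.card = i) (hW : W.card = i) (hC : C.card = r - 2 * i)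
    (dAB : Disjoint A B) (dAW : Disjoint A W) (dBW : Disjoint B W)
    (dAC : Disjoint A C) (dBC : Disjoint B C) (dWC : Disjoint W C)
    (e1 : (A ∪ B) ∪ C ∈ H) (e2 : (B ∪ W) ∪ C ∈ H) (e3 : (W ∪ A) ∪ C ∈ H) :
    HasCopy H (suspend (r - 2 * i) (expTriangle i)) := by
  classical
  obtain ⟨fA, hfA, hfAim⟩ := exists_enum hA
  obtain ⟨fB, hfB, hfBim⟩ := exists_enum hB
  obtain ⟨fW, hfW, hfWim⟩ := exists_enum hW
  obtain ⟨fC, hfC, hfCim⟩ := exists_enum hC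
  refine ⟨tφ i (r - 2 * i) fA fB fW fC, ?_, ?_⟩
  · -- injectivity
    have iA : (Finset.univ.filter fun v : Fin (3 * i + (r - 2 * i)) =>
        0 ≤ v.val ∧ v.val < 0 + i).image (tφ i (r - 2 * i) fA fB fW fC) = A :=
      (image_filter_eq _ (by omega) (fun v => Iff.rfl) fA _
        (fun v h1 h2 => tφ_eval0 v (by omega))).trans hfAim
    have iB : (Finset.univ.filter fun v : Fin (3 * i + (r - 2 * i)) =>
        i ≤ v.val ∧ v.val < i + i).image (tφ i (r - 2 * i) fA fB fW fC) = B :=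
      (image_filter_eq _ (by omega) (fun v => Iff.rfl) fB _
        (fun v h1 h2 => tφ_eval1 v h1 (by omega))).trans hfBim
    have iW : (Finset.univ.filter fun v : Fin (3 * i + (r - 2 * i)) =>
        2 * i ≤ v.val ∧ v.val < 2 * i + i).image (tφ i (r - 2 * i) fA fB fW fC) = W :=
      (image_filter_eq _ (by omega) (fun v => Iff.rfl) fW _
        (fun v h1 h2 => tφ_eval2 v h1 (by omega))).trans hfWim
    have iC : (Finset.univ.filter fun v : Fin (3 * i + (r - 2 * i)) =>
        3 * i ≤ v.val ∧ v.val < 3 * i + (r - 2 * i)).image (tφ i (r - 2 * i) fA fB fW fC) = C :=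
      (image_filter_eq _ (by omega) (fun v => Iff.rfl) fC _
        (fun v h1 h2 => tφ_eval3 v h1)).trans hfCim
    have hsplit : (Finset.univ : Finset (Fin (3 * i + (r - 2 * i)))) =
        ((Finset.univ.filter (fun v : Fin (3 * i + (r - 2 * i)) => 0 ≤ v.val ∧ v.val < 0 + i) ∪
          Finset.univ.filter (fun v : Fin (3 * i + (r - 2 * i)) => i ≤ v.val ∧ v.val < i + i)) ∪
          Finset.univ.filter (fun v : Fin (3 * i + (r - 2 * i)) =>
            2 * i ≤ v.val ∧ v.val < 2 * i + i)) ∪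
          Finset.univ.filter (fun v : Fin (3 * i + (r - 2 * i)) =>
            3 * i ≤ v.val ∧ v.val < 3 * i + (r - 2 * i)) := by
      ext v
      simp only [Finset.mem_univ, Finset.mem_union, Finset.mem_filter, true_and, true_iff]
      have := v.isLt; omega
    have himuniv : (Finset.univ : Finset (Fin (3 * i + (r - 2 * i)))).image
        (tφ i (r - 2 * i) fA fB fW fC) = ((A ∪ B) ∪ W) ∪ C := by
      rw [hsplit, Finset.image_union, Finset.image_union, Finset.image_union, iA, iB, iW, iC]
    have hinj : Set.InjOn (tφ i (r - 2 * i) fA fB fW fC)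
        ((Finset.univ : Finset (Fin (3 * i + (r - 2 * i)))) : Set (Fin (3 * i + (r - 2 * i)))) := by
      apply Finset.injOn_of_card_image_eq
      rw [himuniv]
      rw [Finset.card_union_of_disjoint, Finset.card_union_of_disjoint,
        Finset.card_union_of_disjoint dAB, hA, hB, hW, hC]
      · simp only [Finset.card_univ, Fintype.card_fin]
        omega
      · exact Finset.disjoint_union_left.mpr ⟨dAW, dBW⟩
      · exact Finset.disjoint_union_left.mpr
          ⟨Finset.disjoint_union_left.mpr ⟨dAC, dBC⟩, dWC⟩
    exact hinj.mono (by intro x hx; simp)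
  · -- edges
    intro e he
    simp only [suspend, expTriangle, Finset.mem_image, Finset.mem_insert,
      Finset.mem_singleton] at he
    obtain ⟨pe, hpe, rfl⟩ := he
    have imA : ∀ (P : Fin (3 * i) → Prop) (_ : DecidablePred P),
        (∀ v : Fin (3 * i), P v ↔ (0 ≤ v.val ∧ v.val < 0 + i)) →
        (Finset.univ.filter P).image
          ((tφ i (r - 2 * i) fA fB fW fC) ∘ (Fin.castAdd (r - 2 * i))) = A := by
      intro P hP hiff
      exact (image_filter_eq P (by omega) hiff fA _
        (fun v h1 h2 => tφ_eval0 (Fin.castAdd _ v)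
          (by simp only [Fin.coe_castAdd]; omega))).trans hfAim
    have imB : ∀ (P : Fin (3 * i) → Prop) (_ : DecidablePred P),
        (∀ v : Fin (3 * i), P v ↔ (i ≤ v.val ∧ v.val < i + i)) →
        (Finset.univ.filter P).image
          ((tφ i (r - 2 * i) fA fB fW fC) ∘ (Fin.castAdd (r - 2 * i))) = B := by
      intro P hP hiff
      exact (image_filter_eq P (by omega) hiff fB _
        (fun v h1 h2 => tφ_eval1 (Fin.castAdd _ v)
          (by simp only [Fin.coe_castAdd]; omega)
          (by simp only [Fin.coe_castAdd]; omega))).trans hfBim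
    have imW : ∀ (P : Fin (3 * i) → Prop) (_ : DecidablePred P),
        (∀ v : Fin (3 * i), P v ↔ (2 * i ≤ v.val ∧ v.val < 2 * i + i)) →
        (Finset.univ.filter P).image
          ((tφ i (r - 2 * i) fA fB fW fC) ∘ (Fin.castAdd (r - 2 * i))) = W := by
      intro P hP hiff
      exact (image_filter_eq P (by omega) hiff fW _
        (fun v h1 h2 => tφ_eval2 (Fin.castAdd _ v)
          (by simp only [Fin.coe_castAdd]; omega)
          (by simp only [Fin.coe_castAdd]; omega))).trans hfWim
    have imC : (Finset.univ.filter (fun v : Fin (3 * i + (r - 2 * i)) => 3 * i ≤ v.val)).image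
        (tφ i (r - 2 * i) fA fB fW fC) = C := by
      refine (image_filter_eq _ (le_refl _) (fun v => ?_) fC _
        (fun v h1 h2 => tφ_eval3 v h1)).trans hfCim
      have := v.isLt
      constructor <;> intro h <;> omega
    rcases hpe with h | h | h <;> subst h <;>
      simp only [Finset.image_union, Finset.image_image]
    · rw [imA _ inferInstance (fun v => by omega), imB _ inferInstance (fun v => by omega), imC]
      exact e1
    · rw [imB _ inferInstance (fun v => by omega), imW _ inferInstance (fun v => by omega), imC]
      exact e2
    · rw [imW _ inferInstance (fun v => by omega), imA _ inferInstance (fun v => by omega), imC]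
      exact e3

/-- Degree of an `(r-i)`-set: number of edges containing it. -/
def deg {n : ℕ} (H : Finset (Finset (Fin n))) (D : Finset (Fin n)) : ℕ :=
  (H.filter fun f => D ⊆ f).card

lemma card_intersecting_le (hi : 1 ≤ i) (hr : 2 * i ≤ r) {e : Finset (Fin n)}
    (he : e.card = r) {ℬ : Finset (Finset (Fin n))}
    (hsub : ∀ B ∈ ℬ, B ⊆ e ∧ B.card = i)
    (hint : ∀ B1 ∈ ℬ, ∀ B2 ∈ ℬ, ¬ Disjoint B1 B2) :
    ℬ.card ≤ (r - 1).choose (i - 1) := by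
  classical
  obtain ⟨f, hf, hfim⟩ := exists_enum he
  set Φ : Finset (Fin n) → Finset (Fin r) := fun B => univ.filter (fun j => f j ∈ B) with hΦ
  have hmem : ∀ B, B ⊆ e → ∀ x ∈ B, ∃ j, f j = x := by
    intro B hBe x hx
    have : x ∈ Finset.image f Finset.univ := hfim ▸ hBe hx
    obtain ⟨j, _, hj⟩ := Finset.mem_image.mp this
    exact ⟨j, hj⟩
  have hsubkey : ∀ B1 ∈ ℬ, ∀ B2 ∈ ℬ, Φ B1 = Φ B2 → B1 ⊆ B2 := by
    intro B1 h1 B2 h2 heq x hx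
    obtain ⟨j, rfl⟩ := hmem B1 (hsub B1 h1).1 x hx
    have hj1 : j ∈ Φ B1 := Finset.mem_filter.mpr ⟨Finset.mem_univ _, hx⟩
    rw [heq] at hj1
    exact (Finset.mem_filter.mp hj1).2
  have hΦinj : Set.InjOn Φ ℬ := fun B1 h1 B2 h2 heq =>
    Finset.Subset.antisymm (hsubkey B1 h1 B2 h2 heq) (hsubkey B2 h2 B1 h1 heq.symm)
  have hcardΦ : ∀ B ∈ ℬ, (Φ B).card = B.card := by
    intro B hB
    apply Finset.card_bij (fun j _ => f j)
    · intro j hj; exact (Finset.mem_filter.mp hj).2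
    · intro j1 _ j2 _ hj; exact hf hj
    · intro x hx
      obtain ⟨j, rfl⟩ := hmem B (hsub B hB).1 x hx
      exact ⟨j, Finset.mem_filter.mpr ⟨Finset.mem_univ _, hx⟩, rfl⟩
  have hEKR := Finset.erdos_ko_rado (n := r) (r := i)
    (𝒜 := ℬ.image Φ) ?_ ?_ ?_
  · rwa [Finset.card_image_of_injOn hΦinj] at hEKR
  · intro A' hA' B' hB' hdisj
    simp only [Finset.coe_image, Set.mem_image, Finset.mem_coe] at hA' hB'
    obtain ⟨B1, h1, rfl⟩ := hA'
    obtain ⟨B2, h2, rfl⟩ := hB'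
    obtain ⟨x, hx1, hx2⟩ := Finset.not_disjoint_iff.mp (hint B1 h1 B2 h2)
    obtain ⟨j, rfl⟩ := hmem B1 (hsub B1 h1).1 x hx1
    exact Finset.not_disjoint_iff.mpr
      ⟨j, Finset.mem_filter.mpr ⟨Finset.mem_univ _, hx1⟩,
        Finset.mem_filter.mpr ⟨Finset.mem_univ _, hx2⟩⟩ hdisj
  · intro B' hB'
    simp only [Finset.coe_image, Set.mem_image, Finset.mem_coe] at hB'
    obtain ⟨B, hB, rfl⟩ := hB'
    rw [hcardΦ B hB]
    exact (hsub B hB).2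
  · exact (Nat.le_div_iff_mul_le (by norm_num)).mpr (by omega)

lemma union_sdiff_pair {α : Type*} [DecidableEq α] {e B1 B2 : Finset α}
    (h1 : B1 ⊆ e) (h2 : B2 ⊆ e) (hd : Disjoint B1 B2) :
    B2 ∪ (e \ (B1 ∪ B2)) = e \ B1 := by
  ext x
  simp only [Finset.mem_union, Finset.mem_sdiff]
  constructor
  · rintro (hx | ⟨hxe, hx12⟩)
    · exact ⟨h2 hx, fun hx1 => (Finset.disjoint_left.mp hd hx1) hx⟩
    · exact ⟨hxe, fun h => hx12 (Or.inl h)⟩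
  · rintro ⟨hxe, hx1⟩
    by_cases hx2 : x ∈ B2
    · exact Or.inl hx2
    · exact Or.inr ⟨hxe, fun h => h.elim hx1 hx2⟩

lemma sum_deg_block_le (hi : 1 ≤ i) (hr : 2 * i ≤ r) {H : Finset (Finset (Fin n))}
    (hunif : ∀ e ∈ H, e.card = r)
    (hfree : ¬ HasCopy H (suspend (r - 2 * i) (expTriangle i)))
    {e : Finset (Fin n)} (he : e ∈ H) :
    ∑ B ∈ e.powersetCard i, deg H (e \ B) ≤ n.choose i * (r - 1).choose (i - 1) := by
  classical
  have hecard := hunif e he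
  have hdeg : ∀ B ∈ e.powersetCard i, deg H (e \ B) =
      ((univ.powersetCard i).filter fun Wt => Disjoint Wt (e \ B) ∧ (e \ B) ∪ Wt ∈ H).card := by
    intro B hB
    obtain ⟨hBe, hBcard⟩ := Finset.mem_powersetCard.mp hB
    have hD : (e \ B).card = r - i := by rw [Finset.card_sdiff_of_subset hBe, hecard, hBcard]
    apply Finset.card_bij (fun f _ => f \ (e \ B))
    · intro f hfm
      obtain ⟨hfH, hDf⟩ := Finset.mem_filter.mp hfm
      refine Finset.mem_filter.mpr ⟨Finset.mem_powersetCard.mpr ⟨Finset.subset_univ _, ?_⟩,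
        Finset.sdiff_disjoint, ?_⟩
      · rw [Finset.card_sdiff_of_subset hDf, hunif f hfH, hD]; omega
      · rwa [Finset.union_sdiff_of_subset hDf]
    · intro f1 hf1 f2 hf2 heq
      have h1 := Finset.union_sdiff_of_subset (Finset.mem_filter.mp hf1).2
      have h2 := Finset.union_sdiff_of_subset (Finset.mem_filter.mp hf2).2
      rw [← h1, ← h2, heq]
    · intro Wt hWt
      obtain ⟨hWtP, hWtd, hWtH⟩ := Finset.mem_filter.mp hWt
      exact ⟨(e \ B) ∪ Wt, Finset.mem_filter.mpr ⟨hWtH, Finset.subset_union_left⟩,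
        Finset.union_sdiff_cancel_left hWtd.symm⟩
  rw [Finset.sum_congr rfl hdeg]
  have hswap : ∑ B ∈ e.powersetCard i,
      ((univ.powersetCard i).filter fun Wt => Disjoint Wt (e \ B) ∧ (e \ B) ∪ Wt ∈ H).card =
      ∑ Wt ∈ univ.powersetCard i,
      ((e.powersetCard i).filter fun B => Disjoint Wt (e \ B) ∧ (e \ B) ∪ Wt ∈ H).card := by
    simp_rw [Finset.card_filter]
    exact Finset.sum_comm
  rw [hswap]
  have hbound : ∀ Wt ∈ univ.powersetCard i,
      ((e.powersetCard i).filter fun B => Disjoint Wt (e \ B) ∧ (e \ B) ∪ Wt ∈ H).card ≤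
      (r - 1).choose (i - 1) := by
    intro Wt hWtmem
    have hWtcard : Wt.card = i := (Finset.mem_powersetCard.mp hWtmem).2
    apply card_intersecting_le hi hr hecard
    · intro B hB
      exact ⟨(Finset.mem_powersetCard.mp (Finset.mem_filter.mp hB).1).1,
        (Finset.mem_powersetCard.mp (Finset.mem_filter.mp hB).1).2⟩
    · intro B1 h1 B2 h2 hdisj
      obtain ⟨h1m, hd1, hm1⟩ := Finset.mem_filter.mp h1
      obtain ⟨h2m, hd2, hm2⟩ := Finset.mem_filter.mp h2
      obtain ⟨hB1e, hB1card⟩ := Finset.mem_powersetCard.mp h1m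
      obtain ⟨hB2e, hB2card⟩ := Finset.mem_powersetCard.mp h2m
      -- Wt is disjoint from e
      have hWtB1 : Disjoint Wt B1 := by
        refine Finset.disjoint_left.mpr fun x hx hx1 => ?_
        have hxe2 : x ∈ e \ B2 := Finset.mem_sdiff.mpr
          ⟨hB1e hx1, fun hx2 => (Finset.disjoint_left.mp hdisj hx1) hx2⟩
        exact (Finset.disjoint_left.mp hd2 hx) hxe2
      have hWte : Disjoint Wt e := by
        have : e = (e \ B1) ∪ B1 := (Finset.sdiff_union_of_subset hB1e).symm
        rw [this]
        exact Finset.disjoint_union_right.mpr ⟨hd1, hWtB1⟩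
      set C0 := e \ (B1 ∪ B2) with hC0
      have hC0card : C0.card = r - 2 * i := by
        rw [hC0, Finset.card_sdiff_of_subset (Finset.union_subset hB1e hB2e), hecard,
          Finset.card_union_of_disjoint hdisj, hB1card, hB2card]
        omega
      have he1 : (B1 ∪ B2) ∪ C0 ∈ H := by
        rwa [hC0, Finset.union_sdiff_of_subset (Finset.union_subset hB1e hB2e)]
      have he2 : (B2 ∪ Wt) ∪ C0 ∈ H := by
        have : (B2 ∪ Wt) ∪ C0 = (e \ B1) ∪ Wt := by
          rw [Finset.union_right_comm, union_sdiff_pair hB1e hB2e hdisj]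
        rwa [this]
      have he3 : (Wt ∪ B1) ∪ C0 ∈ H := by
        have : (Wt ∪ B1) ∪ C0 = (e \ B2) ∪ Wt := by
          rw [Finset.union_comm Wt B1, Finset.union_right_comm, hC0, Finset.union_comm B1 B2,
            union_sdiff_pair hB2e hB1e hdisj.symm]
        rwa [this]
      exact hfree (hasCopy_of_triangle hi hr hB1card hB2card hWtcard hC0card
        hdisj hWtB1.symm (hWte.mono_right hB2e).symm
        (Finset.sdiff_disjoint.mono_right Finset.subset_union_left).symm
        (Finset.sdiff_disjoint.mono_right Finset.subset_union_right).symm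
        (hWte.mono_right Finset.sdiff_subset)
        he1 he2 he3)
  calc ∑ Wt ∈ univ.powersetCard i,
      ((e.powersetCard i).filter fun B => Disjoint Wt (e \ B) ∧ (e \ B) ∪ Wt ∈ H).card
      ≤ ∑ _Wt ∈ (univ : Finset (Fin n)).powersetCard i, (r - 1).choose (i - 1) :=
        Finset.sum_le_sum hbound
    _ = n.choose i * (r - 1).choose (i - 1) := by
        rw [Finset.sum_const, smul_eq_mul, Finset.card_powersetCard, Finset.card_univ,
          Fintype.card_fin]

lemma powersetCard_eq_filter_univ {n k : ℕ} (e : Finset (Fin n)) :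
    e.powersetCard k = ((univ : Finset (Fin n)).powersetCard k).filter (fun D => D ⊆ e) := by
  ext D
  simp only [Finset.mem_powersetCard, Finset.mem_filter]
  constructor
  · rintro ⟨h1, h2⟩; exact ⟨⟨Finset.subset_univ _, h2⟩, h1⟩
  · rintro ⟨⟨_, h2⟩, h1⟩; exact ⟨h1, h2⟩

lemma inner_reindex {H : Finset (Finset (Fin n))} (hunif : ∀ e ∈ H, e.card = r)
    (hir : i ≤ r) {e : Finset (Fin n)} (he : e ∈ H) :
    ∑ B ∈ e.powersetCard i, deg H (e \ B) = ∑ D ∈ e.powersetCard (r - i), deg H D := by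
  classical
  have hecard := hunif e he
  apply Finset.sum_nbij' (fun B => e \ B) (fun D => e \ D)
  · intro B hB
    obtain ⟨hBe, hBcard⟩ := Finset.mem_powersetCard.mp hB
    exact Finset.mem_powersetCard.mpr ⟨Finset.sdiff_subset, by
      rw [Finset.card_sdiff_of_subset hBe, hecard, hBcard]⟩
  · intro D hD
    obtain ⟨hDe, hDcard⟩ := Finset.mem_powersetCard.mp hD
    exact Finset.mem_powersetCard.mpr ⟨Finset.sdiff_subset, by
      rw [Finset.card_sdiff_of_subset hDe, hecard, hDcard]; omega⟩
  · intro B hB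
    exact Finset.sdiff_sdiff_eq_self (Finset.mem_powersetCard.mp hB).1
  · intro D hD
    exact Finset.sdiff_sdiff_eq_self (Finset.mem_powersetCard.mp hD).1
  · intro B hB
    rfl

lemma sum_deg_eq {H : Finset (Finset (Fin n))} (hunif : ∀ e ∈ H, e.card = r) :
    ∑ D ∈ (univ : Finset (Fin n)).powersetCard (r - i), deg H D = H.card * r.choose (r - i) := by
  classical
  simp_rw [deg, Finset.card_filter]
  rw [Finset.sum_comm]
  have : ∀ e ∈ H, (∑ D ∈ (univ : Finset (Fin n)).powersetCard (r - i), if D ⊆ e then 1 else 0)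
      = r.choose (r - i) := by
    intro e he
    rw [← Finset.card_filter, ← powersetCard_eq_filter_univ, Finset.card_powersetCard,
      hunif e he]
  rw [Finset.sum_congr rfl this, Finset.sum_const, smul_eq_mul]

lemma sum_deg_sq_eq {H : Finset (Finset (Fin n))} (hunif : ∀ e ∈ H, e.card = r) :
    ∑ e ∈ H, ∑ D ∈ e.powersetCard (r - i), deg H D =
    ∑ D ∈ (univ : Finset (Fin n)).powersetCard (r - i), (deg H D) ^ 2 := by
  classical
  have step : ∀ e ∈ H, ∑ D ∈ e.powersetCard (r - i), deg H D =
      ∑ D ∈ (univ : Finset (Fin n)).powersetCard (r - i), if D ⊆ e then deg H D else 0 := by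
    intro e _
    rw [powersetCard_eq_filter_univ, Finset.sum_filter]
  rw [Finset.sum_congr rfl step, Finset.sum_comm]
  apply Finset.sum_congr rfl
  intro D _
  rw [← Finset.sum_filter, Finset.sum_const, smul_eq_mul, pow_two]
  congr 1

lemma main_count (hi : 1 ≤ i) (hr : 2 * i ≤ r) {H : Finset (Finset (Fin n))}
    (hunif : ∀ e ∈ H, e.card = r)
    (hfree : ¬ HasCopy H (suspend (r - 2 * i) (expTriangle i))) :
    H.card * (r.choose i) ^ 2 ≤ n.choose (r - i) * (n.choose i * (r - 1).choose (i - 1)) := by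
  classical
  have hSdeg := sum_deg_eq (i := i) hunif
  have hSsq : ∑ D ∈ (univ : Finset (Fin n)).powersetCard (r - i), (deg H D) ^ 2 ≤
      H.card * (n.choose i * (r - 1).choose (i - 1)) := by
    rw [← sum_deg_sq_eq hunif]
    calc ∑ e ∈ H, ∑ D ∈ e.powersetCard (r - i), deg H D
        ≤ ∑ _e ∈ H, n.choose i * (r - 1).choose (i - 1) := by
          apply Finset.sum_le_sum
          intro e he
          rw [← inner_reindex hunif (by omega) he]
          exact sum_deg_block_le hi hr hunif hfree he
      _ = H.card * (n.choose i * (r - 1).choose (i - 1)) := by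
          rw [Finset.sum_const, smul_eq_mul]
  have hCS : (∑ D ∈ (univ : Finset (Fin n)).powersetCard (r - i), deg H D) ^ 2 ≤
      n.choose (r - i) * ∑ D ∈ (univ : Finset (Fin n)).powersetCard (r - i), (deg H D) ^ 2 := by
    have h := sq_sum_le_card_mul_sum_sq (s := (univ : Finset (Fin n)).powersetCard (r - i))
      (f := fun D => (deg H D : ℤ))
    rw [Finset.card_powersetCard, Finset.card_univ, Fintype.card_fin] at h
    exact_mod_cast h
  have key : (H.card * r.choose (r - i)) ^ 2 ≤
      n.choose (r - i) * (H.card * (n.choose i * (r - 1).choose (i - 1))) := by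
    rw [← hSdeg]
    exact le_trans hCS (Nat.mul_le_mul_left _ hSsq)
  rw [Nat.choose_symm (by omega : i ≤ r)] at key
  rcases Nat.eq_zero_or_pos H.card with h0 | hpos
  · simp [h0]
  · have h1 : H.card * (H.card * (r.choose i) ^ 2) = (H.card * r.choose i) ^ 2 := by ring
    have h2 : H.card * (n.choose (r - i) * (n.choose i * (r - 1).choose (i - 1))) =
        n.choose (r - i) * (H.card * (n.choose i * (r - 1).choose (i - 1))) := by ring
    exact Nat.le_of_mul_le_mul_left (by rw [h1, h2]; exact key) hpos

lemma exNum_le (hi : 1 ≤ i) (hr : 2 * i ≤ r) (n : ℕ) :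
    exNum r n (suspend (r - 2 * i) (expTriangle i)) * (r.choose i) ^ 2 ≤
    n.choose (r - i) * (n.choose i * (r - 1).choose (i - 1)) := by
  classical
  have hc : 0 < (r.choose i) ^ 2 := pow_pos (Nat.choose_pos (by omega)) 2
  refine (Nat.le_div_iff_mul_le hc).mp ?_
  unfold exNum
  apply Finset.sup_le
  intro H hH
  rw [Finset.mem_filter] at hH
  exact (Nat.le_div_iff_mul_le hc).mpr (main_count hi hr hH.2.1 hH.2.2)

lemma exNum_succ {m : ℕ} (Fp : Finset (Finset (Fin m))) {n : ℕ} (hrn : r ≤ n) :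
    exNum r (n + 1) Fp * (n + 1 - r) ≤ (n + 1) * exNum r n Fp := by
  classical
  have key : ∀ H : Finset (Finset (Fin (n + 1))), (∀ e ∈ H, e.card = r) → ¬ HasCopy H Fp →
      H.card * (n + 1 - r) ≤ (n + 1) * exNum r n Fp := by
    intro H hunif hfree
    have hle : ∀ v : Fin (n + 1), (H.filter fun e => v ∉ e).card ≤ exNum r n Fp := by
      intro v
      have hcard : (H.filter fun e => v ∉ e).card =
          ((univ : Finset (Finset (Fin n))).filter
            (fun f => Finset.image v.succAbove f ∈ H)).card := by
        symm
        apply Finset.card_bij (fun f _ => Finset.image v.succAbove f)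
        · intro f hf
          refine Finset.mem_filter.mpr ⟨(Finset.mem_filter.mp hf).2, ?_⟩
          intro hvm
          obtain ⟨x, _, hxv⟩ := Finset.mem_image.mp hvm
          exact Fin.succAbove_ne v x hxv
        · intro f1 _ f2 _ h
          exact Finset.image_injective Fin.succAbove_right_injective h
        · intro e hem
          obtain ⟨he1, he2⟩ := Finset.mem_filter.mp hem
          have hinj : Set.InjOn v.succAbove (v.succAbove ⁻¹' ↑e) :=
            Fin.succAbove_right_injective.injOn
          have him : Finset.image v.succAbove (e.preimage v.succAbove hinj) = e := by
            rw [Finset.image_preimage]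
            apply Finset.filter_true_of_mem
            intro x hx
            rw [Fin.range_succAbove]
            intro hxv
            rw [Set.mem_singleton_iff] at hxv
            exact he2 (hxv ▸ hx)
          exact ⟨e.preimage v.succAbove hinj,
            Finset.mem_filter.mpr ⟨Finset.mem_univ _, by rw [him]; exact he1⟩, him⟩
      rw [hcard]
      have hmem : ((univ : Finset (Finset (Fin n))).filter
          (fun f => Finset.image v.succAbove f ∈ H)) ∈
          ((Finset.univ : Finset (Finset (Finset (Fin n)))).filter fun H' =>
            (∀ e ∈ H', e.card = r) ∧ ¬ HasCopy H' Fp) := by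
        refine Finset.mem_filter.mpr ⟨Finset.mem_univ _, ?_, ?_⟩
        · intro f hf
          have := hunif _ (Finset.mem_filter.mp hf).2
          rwa [Finset.card_image_of_injective _ Fin.succAbove_right_injective] at this
        · rintro ⟨φ, hφinj, hφmem⟩
          apply hfree
          refine ⟨v.succAbove ∘ φ, ?_, ?_⟩
          · exact (Fin.succAbove_right_injective.injOn).comp hφinj (Set.mapsTo_univ _ _)
          · intro e heF
            rw [← Finset.image_image]
            exact (Finset.mem_filter.mp (hφmem e heF)).2
      exact Finset.le_sup (f := Finset.card) hmem
    have hsum : ∑ v : Fin (n + 1), (H.filter fun e => v ∉ e).card = H.card * (n + 1 - r) := by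
      simp_rw [Finset.card_filter]
      rw [Finset.sum_comm]
      have hpt : ∀ e ∈ H, (∑ v : Fin (n + 1), if v ∉ e then 1 else 0) = n + 1 - r := by
        intro e he
        rw [← Finset.card_filter]
        have hfe : univ.filter (fun v : Fin (n + 1) => v ∉ e) = univ \ e := by
          ext; simp
        rw [hfe, Finset.card_sdiff_of_subset (Finset.subset_univ _), Finset.card_univ, Fintype.card_fin,
          hunif e he]
      rw [Finset.sum_congr rfl hpt, Finset.sum_const, smul_eq_mul]
    calc H.card * (n + 1 - r) = ∑ v : Fin (n + 1), (H.filter fun e => v ∉ e).card := hsum.symm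
      _ ≤ ∑ _v : Fin (n + 1), exNum r n Fp := Finset.sum_le_sum (fun v _ => hle v)
      _ = (n + 1) * exNum r n Fp := by
          rw [Finset.sum_const, Finset.card_univ, Fintype.card_fin, smul_eq_mul]
  have h2 : exNum r (n + 1) Fp ≤ ((n + 1) * exNum r n Fp) / (n + 1 - r) := by
    unfold exNum
    apply Finset.sup_le
    intro H hH
    rw [Finset.mem_filter] at hH
    exact (Nat.le_div_iff_mul_le (by omega)).mpr (key H hH.2.1 hH.2.2)
  calc exNum r (n + 1) Fp * (n + 1 - r)
      ≤ (((n + 1) * exNum r n Fp) / (n + 1 - r)) * (n + 1 - r) :=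
        Nat.mul_le_mul_right _ h2
    _ ≤ (n + 1) * exNum r n Fp := Nat.div_mul_le_self _ _

lemma choose_prod_identity (k : ℕ) : ∀ (j n : ℕ), j + k ≤ n →
    n.choose k * ∏ t ∈ Finset.range j, (n - k - t) =
    (n - j).choose k * ∏ t ∈ Finset.range j, (n - t) := by
  intro j
  induction j with
  | zero => intro n _; simp
  | succ j IH =>
    intro n h
    have step : (n - j).choose k * (n - k - j) = (n - (j + 1)).choose k * (n - j) := by
      have h1 := Nat.choose_mul_succ_eq (n - (j + 1)) k
      have e1 : n - (j + 1) + 1 = n - j := by omega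
      rw [e1] at h1
      have e2 : n - j - k = n - k - j := by omega
      rw [e2] at h1
      exact h1.symm
    calc n.choose k * ∏ t ∈ Finset.range (j + 1), (n - k - t)
        = (n.choose k * ∏ t ∈ Finset.range j, (n - k - t)) * (n - k - j) := by
          rw [Finset.prod_range_succ]; ring
      _ = ((n - j).choose k * ∏ t ∈ Finset.range j, (n - t)) * (n - k - j) := by
          rw [IH n (by omega)]
      _ = ((n - j).choose k * (n - k - j)) * ∏ t ∈ Finset.range j, (n - t) := by ring
      _ = ((n - (j + 1)).choose k * (n - j)) * ∏ t ∈ Finset.range j, (n - t) := by rw [step]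
      _ = (n - (j + 1)).choose k * ∏ t ∈ Finset.range (j + 1), (n - t) := by
          rw [Finset.prod_range_succ]; ring

/-- The limiting ratio function. -/
noncomputable def gfun (k i : ℕ) : ℕ → ℝ := fun n =>
  ∏ t ∈ Finset.range i, (((n : ℝ) - t) / ((n : ℝ) - (k + t)))

lemma gfun_tendsto (k i : ℕ) : Tendsto (gfun k i) atTop (𝓝 1) := by
  have main : Tendsto (gfun k i) atTop (𝓝 (∏ t ∈ Finset.range i, (1 : ℝ))) := by
    apply tendsto_finset_prod
    intro t _
    have hc : Tendsto (fun _ : ℕ => (1 : ℝ)) atTop (𝓝 1) := tendsto_const_nhds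
    have h1 : Tendsto (fun n : ℕ => 1 - (t : ℝ) / n) atTop (𝓝 1) := by
      simpa using hc.sub (tendsto_const_div_atTop_nhds_zero_nat (t : ℝ))
    have h2 : Tendsto (fun n : ℕ => 1 - ((k : ℝ) + t) / n) atTop (𝓝 1) := by
      simpa using hc.sub (tendsto_const_div_atTop_nhds_zero_nat ((k : ℝ) + t))
    have hdiv : Tendsto (fun n : ℕ => (1 - (t : ℝ) / n) / (1 - ((k : ℝ) + t) / n))
        atTop (𝓝 1) := by
      have h := h1.div h2 one_ne_zero; rw [div_one] at h; exact h
    apply hdiv.congr'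
    filter_upwards [eventually_ge_atTop (k + t + 1)] with n hn
    have hn0 : (0 : ℝ) < (n : ℝ) := by
      have : (0 : ℕ) < n := by omega
      exact_mod_cast this
    have hkt : (k : ℝ) + t < n := by exact_mod_cast (by omega : k + t < n)
    have hd2 : (n : ℝ) - ((k : ℝ) + t) ≠ 0 := by linarith
    have hd1 : 1 - ((k : ℝ) + t) / n ≠ 0 := by
      have : ((k : ℝ) + t) / n < 1 := (div_lt_one hn0).mpr hkt
      linarith
    rw [div_eq_div_iff hd1 hd2]
    field_simp
  simpa using main

lemma choose_ratio_eq {k i n : ℕ} (h : i + k ≤ n) :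
    ((n.choose k : ℝ)) / ((n - i).choose k : ℝ) = gfun k i n := by
  have hid := choose_prod_identity k i n h
  have hcast : ((n.choose k : ℝ)) * ∏ t ∈ Finset.range i, ((n : ℝ) - (k + t)) =
      (((n - i).choose k : ℝ)) * ∏ t ∈ Finset.range i, ((n : ℝ) - t) := by
    have c1 : ∀ t ∈ Finset.range i, ((n - k - t : ℕ) : ℝ) = (n : ℝ) - (k + t) := by
      intro t ht
      have htl := Finset.mem_range.mp ht
      rw [Nat.sub_sub, Nat.cast_sub (by omega)]
      push_cast
      ring
    have c2 : ∀ t ∈ Finset.range i, ((n - t : ℕ) : ℝ) = (n : ℝ) - t := by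
      intro t ht
      have htl := Finset.mem_range.mp ht
      rw [Nat.cast_sub (by omega)]
    calc ((n.choose k : ℝ)) * ∏ t ∈ Finset.range i, ((n : ℝ) - (k + t))
        = ((n.choose k : ℝ)) * ∏ t ∈ Finset.range i, ((n - k - t : ℕ) : ℝ) := by
          rw [Finset.prod_congr rfl c1]
      _ = ((n.choose k * ∏ t ∈ Finset.range i, (n - k - t) : ℕ) : ℝ) := by push_cast; ring
      _ = (((n - i).choose k * ∏ t ∈ Finset.range i, (n - t) : ℕ) : ℝ) := by rw [hid]
      _ = (((n - i).choose k : ℝ)) * ∏ t ∈ Finset.range i, ((n - t : ℕ) : ℝ) := by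
          push_cast; ring
      _ = (((n - i).choose k : ℝ)) * ∏ t ∈ Finset.range i, ((n : ℝ) - t) := by
          rw [Finset.prod_congr rfl c2]
  have hch : (0 : ℝ) < ((n - i).choose k : ℝ) := by
    exact_mod_cast Nat.choose_pos (by omega : k ≤ n - i)
  have hprod : (0 : ℝ) < ∏ t ∈ Finset.range i, ((n : ℝ) - (k + t)) := by
    apply Finset.prod_pos
    intro t ht
    have htl := Finset.mem_range.mp ht
    have : (k + t : ℕ) < n := by omega
    have : ((k : ℝ) + t) < n := by exact_mod_cast this
    linarith
  rw [gfun, Finset.prod_div_distrib, div_eq_div_iff (ne_of_gt hch) (ne_of_gt hprod)]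
  linear_combination hcast

lemma ratio_antitone_step {m : ℕ} (Fp : Finset (Finset (Fin m))) {n : ℕ} (hn : r ≤ n) :
    (exNum r (n + 1) Fp : ℝ) / ((n + 1).choose r : ℝ) ≤
    (exNum r n Fp : ℝ) / (n.choose r : ℝ) := by
  have hnat := exNum_succ (r := r) Fp hn
  have hch : (n + 1 - r) * (n + 1).choose r = (n + 1) * n.choose r := by
    have h := Nat.choose_mul_succ_eq n r
    calc (n + 1 - r) * (n + 1).choose r = (n + 1).choose r * (n + 1 - r) := by ring
      _ = n.choose r * (n + 1) := h.symm
      _ = (n + 1) * n.choose r := by ring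
  have hpos1 : 0 < n.choose r := Nat.choose_pos hn
  have hpos2 : 0 < (n + 1).choose r := Nat.choose_pos (by omega)
  rw [div_le_div_iff₀ (by exact_mod_cast hpos2) (by exact_mod_cast hpos1)]
  have hnatfinal : exNum r (n + 1) Fp * n.choose r ≤ exNum r n Fp * (n + 1).choose r := by
    have hstep : (exNum r (n + 1) Fp * n.choose r) * (n + 1 - r) ≤
        (exNum r n Fp * (n + 1).choose r) * (n + 1 - r) := by
      calc (exNum r (n + 1) Fp * n.choose r) * (n + 1 - r)
          = (exNum r (n + 1) Fp * (n + 1 - r)) * n.choose r := by ring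
        _ ≤ ((n + 1) * exNum r n Fp) * n.choose r := Nat.mul_le_mul_right _ hnat
        _ = exNum r n Fp * ((n + 1) * n.choose r) := by ring
        _ = exNum r n Fp * ((n + 1 - r) * (n + 1).choose r) := by rw [hch]
        _ = (exNum r n Fp * (n + 1).choose r) * (n + 1 - r) := by ring
    exact Nat.le_of_mul_le_mul_right hstep (by omega)
  exact_mod_cast hnatfinal

lemma a_le_gfun (hi : 1 ≤ i) (hr : 2 * i ≤ r) {n : ℕ} (hn : r ≤ n) :
    (exNum r n (suspend (r - 2 * i) (expTriangle i)) : ℝ) / (n.choose r : ℝ) ≤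
    ((i : ℝ) / r) * gfun (r - i) i n := by
  have hir : i ≤ r := by omega
  have hrpos : 0 < r := by omega
  have hex := exNum_le hi hr n
  have hI1 : (r : ℝ) * ((r - 1).choose (i - 1) : ℝ) = (i : ℝ) * (r.choose i : ℝ) := by
    have h := Nat.add_one_mul_choose_eq (r - 1) (i - 1)
    rw [show r - 1 + 1 = r by omega, show i - 1 + 1 = i by omega] at h
    exact_mod_cast h.trans (mul_comm _ _)
  have hI2 : ((n.choose r : ℝ)) * (r.choose i : ℝ) =
      (n.choose i : ℝ) * ((n - i).choose (r - i) : ℝ) := by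
    exact_mod_cast Nat.choose_mul (n := n) hir
  rw [← choose_ratio_eq (by omega : i + (r - i) ≤ n)]
  rw [div_mul_div_comm]
  have hCnr : (0 : ℝ) < (n.choose r : ℝ) := by exact_mod_cast Nat.choose_pos hn
  have hCd : (0 : ℝ) < ((n - i).choose (r - i) : ℝ) := by
    exact_mod_cast Nat.choose_pos (by omega : r - i ≤ n - i)
  have hden : (0 : ℝ) < (r : ℝ) * ((n - i).choose (r - i) : ℝ) := by positivity
  rw [div_le_div_iff₀ hCnr hden]
  have hc : (0 : ℝ) < (r.choose i : ℝ) := by exact_mod_cast Nat.choose_pos hir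
  have hc2 : (0 : ℝ) < (r.choose i : ℝ) ^ 2 := by positivity
  have hexR : (exNum r n (suspend (r - 2 * i) (expTriangle i)) : ℝ) * (r.choose i : ℝ) ^ 2 ≤
      (n.choose (r - i) : ℝ) * ((n.choose i : ℝ) * ((r - 1).choose (i - 1) : ℝ)) := by
    exact_mod_cast hex
  refine le_of_mul_le_mul_right ?_ hc2
  calc (exNum r n (suspend (r - 2 * i) (expTriangle i)) : ℝ) *
        ((r : ℝ) * ((n - i).choose (r - i) : ℝ)) * (r.choose i : ℝ) ^ 2
      = ((exNum r n (suspend (r - 2 * i) (expTriangle i)) : ℝ) * (r.choose i : ℝ) ^ 2) *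
        ((r : ℝ) * ((n - i).choose (r - i) : ℝ)) := by ring
    _ ≤ ((n.choose (r - i) : ℝ) * ((n.choose i : ℝ) * ((r - 1).choose (i - 1) : ℝ))) *
        ((r : ℝ) * ((n - i).choose (r - i) : ℝ)) := by
        apply mul_le_mul_of_nonneg_right hexR
        positivity
    _ = (i : ℝ) * (n.choose (r - i) : ℝ) * (n.choose r : ℝ) * (r.choose i : ℝ) ^ 2 := by
        linear_combination ((n.choose (r - i) : ℝ) * (n.choose i : ℝ) *
          ((n - i).choose (r - i) : ℝ)) * hI1 -
          ((i : ℝ) * (r.choose i : ℝ) * (n.choose (r - i) : ℝ)) * hI2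
  
end TuranSusp

/-- For positive integers `r` and `i` with `r ≥ 2i`,
`π(T̂_{2i}^r) ≤ i / r`. -/
theorem turanDensity_susp_le (r i : ℕ) (hi : 1 ≤ i) (hr : 2 * i ≤ r) :
    turanDensity r (suspend (r - 2 * i) (expTriangle i)) ≤ (i : ℝ) / (r : ℝ) := by
  classical
  set F := suspend (r - 2 * i) (expTriangle i) with hF
  set a : ℕ → ℝ := fun n => (exNum r n F : ℝ) / (n.choose r : ℝ) with ha
  have hanti : Antitone (fun j => a (j + r)) := by
    apply antitone_nat_of_succ_le
    intro j
    have h : j + 1 + r = (j + r) + 1 := by omega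
    rw [h]
    exact TuranSusp.ratio_antitone_step F (by omega)
  have hbdd : BddBelow (Set.range fun j => a (j + r)) := by
    refine ⟨0, ?_⟩
    rintro x ⟨j, rfl⟩
    simp only [ha]
    positivity
  have htb := tendsto_atTop_ciInf hanti hbdd
  have hta : Tendsto a atTop (𝓝 (⨅ j, a (j + r))) := (tendsto_add_atTop_iff_nat r).mp htb
  have hub : ∀ᶠ n in atTop, a n ≤ ((i : ℝ) / r) * TuranSusp.gfun (r - i) i n := by
    filter_upwards [eventually_ge_atTop r] with n hn
    exact TuranSusp.a_le_gfun hi hr hn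
  have htw : Tendsto (fun n => ((i : ℝ) / r) * TuranSusp.gfun (r - i) i n) atTop
      (𝓝 ((i : ℝ) / r)) := by
    have := (TuranSusp.gfun_tendsto (r - i) i).const_mul ((i : ℝ) / r)
    simpa using this
  have hL : (⨅ j, a (j + r)) ≤ (i : ℝ) / r := le_of_tendsto_of_tendsto hta htw hub
  have hTD : turanDensity r F = (⨅ j, a (j + r)) := by
    rw [turanDensity]
    exact hta.limUnder_eq
  rw [hTD]
  exact hL
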